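/- Each of the 2-cocycles φ_i of h_2 (for i = 1, 2, 3, specified below) gives, via [x,y]_t = [x,y] + t φ_i(x,y) with t = 1, a solvable 5-dimensional Lie algebra. In particular, the Lie algebra with basis e_1,...,e_5 and nonzero brackets [e_1,e_3] = e_5, [e_1,e_4] = e_1, [e_2,e_4] = e_5 + e_2, [e_3,e_4] = e_3, [e_4,e_5] = −2e_5 is solvable but not nilpotent. -/

import Mathlib

noncomputable section

/-- `μ_{t=1}(d₁)`, the deformation of `h₂` along `φ₁`: nonzero brackets
`[e₁,e₃] = e₅ + 2e₂ − 2e₃`, `[e₁,e₄] = e₃`, `[e₂,e₄] = e₅ + e₂`,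
`[e₃,e₄] = 2e₃ − e₂`. -/
def L1 : Type := Fin 5 → ℝ

/-- `μ_{t=1}(d₂)`, the deformation of `h₂` along `φ₂`: nonzero brackets
`[e₁,e₃] = e₅ + e₁`, `[e₁,e₄] = −e₂`, `[e₂,e₃] = 2e₂`, `[e₂,e₄] = e₅`,
`[e₃,e₄] = −e₄`, `[e₃,e₅] = −3e₅`. -/
def L2 : Type := Fin 5 → ℝ

/-- `μ_{t=1}(d₃)`, the deformation of `h₂` along `φ₃`: nonzero brackets
`[e₁,e₃] = e₅`, `[e₁,e₄] = e₁`, `[e₂,e₄] = e₅ + e₂`, `[e₃,e₄] = e₃`,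
`[e₄,e₅] = −2e₅`. -/
def L3 : Type := Fin 5 → ℝ

instance : AddCommGroup L1 := inferInstanceAs (AddCommGroup (Fin 5 → ℝ))
instance : Module ℝ L1 := inferInstanceAs (Module ℝ (Fin 5 → ℝ))
instance : AddCommGroup L2 := inferInstanceAs (AddCommGroup (Fin 5 → ℝ))
instance : Module ℝ L2 := inferInstanceAs (Module ℝ (Fin 5 → ℝ))
instance : AddCommGroup L3 := inferInstanceAs (AddCommGroup (Fin 5 → ℝ))
instance : Module ℝ L3 := inferInstanceAs (Module ℝ (Fin 5 → ℝ))

def b1 (x y : Fin 5 → ℝ) : Fin 5 → ℝ := fun k =>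
  if k = 1 then 2 * (x 0 * y 2 - x 2 * y 0) + (x 1 * y 3 - x 3 * y 1)
      - (x 2 * y 3 - x 3 * y 2)
  else if k = 2 then -2 * (x 0 * y 2 - x 2 * y 0) + (x 0 * y 3 - x 3 * y 0)
      + 2 * (x 2 * y 3 - x 3 * y 2)
  else if k = 4 then (x 0 * y 2 - x 2 * y 0) + (x 1 * y 3 - x 3 * y 1)
  else 0

def b2 (x y : Fin 5 → ℝ) : Fin 5 → ℝ := fun k =>
  if k = 0 then x 0 * y 2 - x 2 * y 0
  else if k = 1 then -(x 0 * y 3 - x 3 * y 0) + 2 * (x 1 * y 2 - x 2 * y 1)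
  else if k = 3 then -(x 2 * y 3 - x 3 * y 2)
  else if k = 4 then (x 0 * y 2 - x 2 * y 0) + (x 1 * y 3 - x 3 * y 1)
      - 3 * (x 2 * y 4 - x 4 * y 2)
  else 0

def b3 (x y : Fin 5 → ℝ) : Fin 5 → ℝ := fun k =>
  if k = 0 then x 0 * y 3 - x 3 * y 0
  else if k = 1 then x 1 * y 3 - x 3 * y 1
  else if k = 2 then x 2 * y 3 - x 3 * y 2
  else if k = 4 then (x 0 * y 2 - x 2 * y 0) + (x 1 * y 3 - x 3 * y 1)
      - 2 * (x 3 * y 4 - x 4 * y 3)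
  else 0

section lemmas
variable (x y z : Fin 5 → ℝ) (t : ℝ)

lemma b1_add_left : b1 (x + y) z = b1 x z + b1 y z := by
  funext k; simp only [b1, Pi.add_apply]; split_ifs <;> ring
lemma b1_add_right : b1 x (y + z) = b1 x y + b1 x z := by
  funext k; simp only [b1, Pi.add_apply]; split_ifs <;> ring
lemma b1_self : b1 x x = 0 := by
  funext k; simp only [b1, Pi.zero_apply]; split_ifs <;> ring
lemma b1_leibniz : b1 x (b1 y z) = b1 (b1 x y) z + b1 y (b1 x z) := by
  funext k; fin_cases k <;> simp [b1] <;> ring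
lemma b1_smul : b1 x (t • y) = t • b1 x y := by
  funext k; simp only [b1, Pi.smul_apply, smul_eq_mul]; split_ifs <;> ring

lemma b2_add_left : b2 (x + y) z = b2 x z + b2 y z := by
  funext k; simp only [b2, Pi.add_apply]; split_ifs <;> ring
lemma b2_add_right : b2 x (y + z) = b2 x y + b2 x z := by
  funext k; simp only [b2, Pi.add_apply]; split_ifs <;> ring
lemma b2_self : b2 x x = 0 := by
  funext k; simp only [b2, Pi.zero_apply]; split_ifs <;> ring
lemma b2_leibniz : b2 x (b2 y z) = b2 (b2 x y) z + b2 y (b2 x z) := by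
  funext k; fin_cases k <;> simp [b2] <;> ring
lemma b2_smul : b2 x (t • y) = t • b2 x y := by
  funext k; simp only [b2, Pi.smul_apply, smul_eq_mul]; split_ifs <;> ring

lemma b3_add_left : b3 (x + y) z = b3 x z + b3 y z := by
  funext k; simp only [b3, Pi.add_apply]; split_ifs <;> ring
lemma b3_add_right : b3 x (y + z) = b3 x y + b3 x z := by
  funext k; simp only [b3, Pi.add_apply]; split_ifs <;> ring
lemma b3_self : b3 x x = 0 := by
  funext k; simp only [b3, Pi.zero_apply]; split_ifs <;> ring
lemma b3_leibniz : b3 x (b3 y z) = b3 (b3 x y) z + b3 y (b3 x z) := by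
  funext k; fin_cases k <;> simp [b3] <;> ring
lemma b3_smul : b3 x (t • y) = t • b3 x y := by
  funext k; simp only [b3, Pi.smul_apply, smul_eq_mul]; split_ifs <;> ring

end lemmas

instance : LieRing L1 where
  bracket x y := b1 x y
  add_lie := b1_add_left
  lie_add := b1_add_right
  lie_self := b1_self
  leibniz_lie := b1_leibniz

instance : LieAlgebra ℝ L1 where
  lie_smul t x y := b1_smul x y t

instance : LieRing L2 where
  bracket x y := b2 x y
  add_lie := b2_add_left
  lie_add := b2_add_right
  lie_self := b2_self
  leibniz_lie := b2_leibniz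

instance : LieAlgebra ℝ L2 where
  lie_smul t x y := b2_smul x y t

instance : LieRing L3 where
  bracket x y := b3 x y
  add_lie := b3_add_left
  lie_add := b3_add_right
  lie_self := b3_self
  leibniz_lie := b3_leibniz

instance : LieAlgebra ℝ L3 where
  lie_smul t x y := b3_smul x y t

section aux

open LieAlgebra LieSubmodule

lemma bracket_L1 (x y : L1) : ⁅x, y⁆ = b1 x y := rfl
lemma bracket_L2 (x y : L2) : ⁅x, y⁆ = b2 x y := rfl
lemma bracket_L3 (x y : L3) : ⁅x, y⁆ = b3 x y := rfl

/-- span of e₂, e₃, e₅ (coords 0 and 3 vanish), an ideal of L1. -/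
def I11 : LieIdeal ℝ L1 :=
  { carrier := {x : Fin 5 → ℝ | x 0 = 0 ∧ x 3 = 0}
    add_mem' := by rintro a b ⟨ha0, ha3⟩ ⟨hb0, hb3⟩
                   exact ⟨show a 0 + b 0 = (0:ℝ) by rw [ha0, hb0, add_zero], show a 3 + b 3 = (0:ℝ) by rw [ha3, hb3, add_zero]⟩
    zero_mem' := ⟨rfl, rfl⟩
    smul_mem' := by rintro c a ⟨ha0, ha3⟩
                    exact ⟨show c • a 0 = (0:ℝ) by rw [ha0, smul_zero], show c • a 3 = (0:ℝ) by rw [ha3, smul_zero]⟩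
    lie_mem := by rintro x m ⟨h0, h3⟩; exact ⟨by simp [bracket_L1, b1], by simp [bracket_L1, b1]⟩ }

lemma mem_I11 (x : L1) : x ∈ I11 ↔ x 0 = 0 ∧ x 3 = 0 := Iff.rfl

/-- coords 2 vanish: an ideal of L2. -/
def I21 : LieIdeal ℝ L2 :=
  { carrier := {x : Fin 5 → ℝ | x 2 = 0}
    add_mem' := by intro a b ha hb
                   show a 2 + b 2 = (0:ℝ)
                   rw [show a 2 = (0:ℝ) from ha, show b 2 = (0:ℝ) from hb, add_zero]
    zero_mem' := rfl
    smul_mem' := by intro c a ha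
                    show c • a 2 = (0:ℝ)
                    rw [show a 2 = (0:ℝ) from ha, smul_zero]
    lie_mem := by intro x m hm; show b2 x m 2 = 0; simp [b2] }

lemma mem_I21 (x : L2) : x ∈ I21 ↔ x 2 = 0 := Iff.rfl

/-- coords 0, 2, 3 vanish: an ideal of L2. -/
def I22 : LieIdeal ℝ L2 :=
  { carrier := {x : Fin 5 → ℝ | x 0 = 0 ∧ x 2 = 0 ∧ x 3 = 0}
    add_mem' := by rintro a b ⟨ha0, ha2, ha3⟩ ⟨hb0, hb2, hb3⟩
                   exact ⟨show a 0 + b 0 = (0:ℝ) by rw [ha0, hb0, add_zero], show a 2 + b 2 = (0:ℝ) by rw [ha2, hb2, add_zero], show a 3 + b 3 = (0:ℝ) by rw [ha3, hb3, add_zero]⟩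
    zero_mem' := ⟨rfl, rfl, rfl⟩
    smul_mem' := by rintro c a ⟨ha0, ha2, ha3⟩
                    exact ⟨show c • a 0 = (0:ℝ) by rw [ha0, smul_zero], show c • a 2 = (0:ℝ) by rw [ha2, smul_zero], show c • a 3 = (0:ℝ) by rw [ha3, smul_zero]⟩
    lie_mem := by rintro x m ⟨h0, h2, h3⟩
                  exact ⟨by simp [bracket_L2, b2, h0, h2, h3],
                         by simp [bracket_L2, b2],
                         by simp [bracket_L2, b2, h2, h3]⟩ }

lemma mem_I22 (x : L2) : x ∈ I22 ↔ x 0 = 0 ∧ x 2 = 0 ∧ x 3 = 0 := Iff.rfl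

/-- coord 3 vanishes: an ideal of L3. -/
def I31 : LieIdeal ℝ L3 :=
  { carrier := {x : Fin 5 → ℝ | x 3 = 0}
    add_mem' := by intro a b ha hb
                   show a 3 + b 3 = (0:ℝ)
                   rw [show a 3 = (0:ℝ) from ha, show b 3 = (0:ℝ) from hb, add_zero]
    zero_mem' := rfl
    smul_mem' := by intro c a ha
                    show c • a 3 = (0:ℝ)
                    rw [show a 3 = (0:ℝ) from ha, smul_zero]
    lie_mem := by intro x m hm; show b3 x m 3 = 0; simp [b3] }

lemma mem_I31 (x : L3) : x ∈ I31 ↔ x 3 = 0 := Iff.rfl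

/-- span of e₅ (coords 0–3 vanish): an ideal of L3. -/
def I32 : LieIdeal ℝ L3 :=
  { carrier := {x : Fin 5 → ℝ | x 0 = 0 ∧ x 1 = 0 ∧ x 2 = 0 ∧ x 3 = 0}
    add_mem' := by rintro a b ⟨ha0, ha1, ha2, ha3⟩ ⟨hb0, hb1, hb2, hb3⟩
                   exact ⟨show a 0 + b 0 = (0:ℝ) by rw [ha0, hb0, add_zero], show a 1 + b 1 = (0:ℝ) by rw [ha1, hb1, add_zero], show a 2 + b 2 = (0:ℝ) by rw [ha2, hb2, add_zero],
                          show a 3 + b 3 = (0:ℝ) by rw [ha3, hb3, add_zero]⟩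
    zero_mem' := ⟨rfl, rfl, rfl, rfl⟩
    smul_mem' := by rintro c a ⟨ha0, ha1, ha2, ha3⟩
                    exact ⟨show c • a 0 = (0:ℝ) by rw [ha0, smul_zero], show c • a 1 = (0:ℝ) by rw [ha1, smul_zero], show c • a 2 = (0:ℝ) by rw [ha2, smul_zero], show c • a 3 = (0:ℝ) by rw [ha3, smul_zero]⟩
    lie_mem := by rintro x m ⟨h0, h1, h2, h3⟩
                  exact ⟨by simp [bracket_L3, b3, h0, h3],
                         by simp [bracket_L3, b3, h1, h3],
                         by simp [bracket_L3, b3, h2, h3],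
                         by simp [bracket_L3, b3]⟩ }

lemma mem_I32 (x : L3) : x ∈ I32 ↔ x 0 = 0 ∧ x 1 = 0 ∧ x 2 = 0 ∧ x 3 = 0 := Iff.rfl

lemma L1_solvable : LieAlgebra.IsSolvable L1 := by
  refine (LieAlgebra.isSolvable_iff ℝ L1).mpr ⟨2, ?_⟩
  have h1 : derivedSeries ℝ L1 1 ≤ I11 := by
    rw [derivedSeries_def, derivedSeriesOfIdeal_succ, derivedSeriesOfIdeal_zero]
    refine (LieSubmodule.lie_le_iff _ _ _).mpr fun x _ m _ => ?_
    exact ⟨by simp [bracket_L1, b1], by simp [bracket_L1, b1]⟩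
  rw [_root_.eq_bot_iff]
  calc derivedSeries ℝ L1 2 = ⁅derivedSeries ℝ L1 1, derivedSeries ℝ L1 1⁆ := by
        rw [derivedSeries_def, derivedSeriesOfIdeal_succ]
    _ ≤ ⁅I11, I11⁆ := LieSubmodule.mono_lie h1 h1
    _ ≤ ⊥ := by
        refine (LieSubmodule.lie_le_iff _ _ _).mpr fun x hx m hm => ?_
        obtain ⟨hx0, hx3⟩ := (mem_I11 x).mp hx
        obtain ⟨hm0, hm3⟩ := (mem_I11 m).mp hm
        rw [LieSubmodule.mem_bot]
        funext k
        show b1 x m k = (0 : Fin 5 → ℝ) k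
        simp only [b1, Pi.zero_apply, hx0, hx3, hm0, hm3]
        split_ifs <;> ring

lemma L2_solvable : LieAlgebra.IsSolvable L2 := by
  refine (LieAlgebra.isSolvable_iff ℝ L2).mpr ⟨3, ?_⟩
  have h1 : derivedSeries ℝ L2 1 ≤ I21 := by
    rw [derivedSeries_def, derivedSeriesOfIdeal_succ, derivedSeriesOfIdeal_zero]
    refine (LieSubmodule.lie_le_iff _ _ _).mpr fun x _ m _ => ?_
    show b2 x m 2 = 0
    simp [b2]
  have h2 : derivedSeries ℝ L2 2 ≤ I22 := by
    calc derivedSeries ℝ L2 2 = ⁅derivedSeries ℝ L2 1, derivedSeries ℝ L2 1⁆ := by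
          rw [derivedSeries_def, derivedSeriesOfIdeal_succ]
      _ ≤ ⁅I21, I21⁆ := LieSubmodule.mono_lie h1 h1
      _ ≤ I22 := by
          refine (LieSubmodule.lie_le_iff _ _ _).mpr fun x hx m hm => ?_
          have hx2 := (mem_I21 x).mp hx
          have hm2 := (mem_I21 m).mp hm
          exact ⟨by simp [bracket_L2, b2, hx2, hm2], by simp [bracket_L2, b2],
                 by simp [bracket_L2, b2, hx2, hm2]⟩
  rw [_root_.eq_bot_iff]
  calc derivedSeries ℝ L2 3 = ⁅derivedSeries ℝ L2 2, derivedSeries ℝ L2 2⁆ := by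
        rw [derivedSeries_def, derivedSeriesOfIdeal_succ]
    _ ≤ ⁅I22, I22⁆ := LieSubmodule.mono_lie h2 h2
    _ ≤ ⊥ := by
        refine (LieSubmodule.lie_le_iff _ _ _).mpr fun x hx m hm => ?_
        obtain ⟨hx0, hx2, hx3⟩ := (mem_I22 x).mp hx
        obtain ⟨hm0, hm2, hm3⟩ := (mem_I22 m).mp hm
        rw [LieSubmodule.mem_bot]
        funext k
        show b2 x m k = (0 : Fin 5 → ℝ) k
        simp only [b2, Pi.zero_apply, hx0, hx2, hx3, hm0, hm2, hm3]
        split_ifs <;> ring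

lemma L3_solvable : LieAlgebra.IsSolvable L3 := by
  refine (LieAlgebra.isSolvable_iff ℝ L3).mpr ⟨3, ?_⟩
  have h1 : derivedSeries ℝ L3 1 ≤ I31 := by
    rw [derivedSeries_def, derivedSeriesOfIdeal_succ, derivedSeriesOfIdeal_zero]
    refine (LieSubmodule.lie_le_iff _ _ _).mpr fun x _ m _ => ?_
    show b3 x m 3 = 0
    simp [b3]
  have h2 : derivedSeries ℝ L3 2 ≤ I32 := by
    calc derivedSeries ℝ L3 2 = ⁅derivedSeries ℝ L3 1, derivedSeries ℝ L3 1⁆ := by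
          rw [derivedSeries_def, derivedSeriesOfIdeal_succ]
      _ ≤ ⁅I31, I31⁆ := LieSubmodule.mono_lie h1 h1
      _ ≤ I32 := by
          refine (LieSubmodule.lie_le_iff _ _ _).mpr fun x hx m hm => ?_
          have hx3 := (mem_I31 x).mp hx
          have hm3 := (mem_I31 m).mp hm
          exact ⟨by simp [bracket_L3, b3, hx3, hm3], by simp [bracket_L3, b3, hx3, hm3],
                 by simp [bracket_L3, b3, hx3, hm3], by simp [bracket_L3, b3]⟩
  rw [_root_.eq_bot_iff]
  calc derivedSeries ℝ L3 3 = ⁅derivedSeries ℝ L3 2, derivedSeries ℝ L3 2⁆ := by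
        rw [derivedSeries_def, derivedSeriesOfIdeal_succ]
    _ ≤ ⁅I32, I32⁆ := LieSubmodule.mono_lie h2 h2
    _ ≤ ⊥ := by
        refine (LieSubmodule.lie_le_iff _ _ _).mpr fun x hx m hm => ?_
        obtain ⟨hx0, hx1, hx2, hx3⟩ := (mem_I32 x).mp hx
        obtain ⟨hm0, hm1, hm2, hm3⟩ := (mem_I32 m).mp hm
        rw [LieSubmodule.mem_bot]
        funext k
        show b3 x m k = (0 : Fin 5 → ℝ) k
        simp only [b3, Pi.zero_apply, hx0, hx1, hx2, hx3, hm0, hm1, hm2, hm3]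
        split_ifs <;> ring

/-- the vector −e₄/2 of L3 -/
def E4 : L3 := fun i => if i = 3 then (-1/2 : ℝ) else 0

/-- the basis vector e₅ of L3 -/
def E5 : L3 := fun i => if i = 4 then 1 else 0

lemma L3_not_nilpotent : ¬ LieRing.IsNilpotent L3 := by
  intro h
  obtain ⟨k, hk⟩ := (LieModule.isNilpotent_iff ℝ L3 L3).mp h
  have key : ∀ n, E5 ∈ LieModule.lowerCentralSeries ℝ L3 L3 n := by
    intro n
    induction n with
    | zero => exact LieSubmodule.mem_top _
    | succ n ih =>
      rw [LieModule.lowerCentralSeries_succ]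
      have hb : ⁅E4, E5⁆ = E5 := by
        rw [bracket_L3]
        funext j
        fin_cases j <;> simp [b3, E4, E5] <;> norm_num
      rw [← hb]
      exact LieSubmodule.lie_mem_lie (LieSubmodule.mem_top _) ih
  have h5 := key k
  rw [hk, LieSubmodule.mem_bot] at h5
  have : E5 4 = 0 := by rw [h5]; rfl
  simp [E5] at this

end aux

/-- Each of the deformed algebras `μ_{t=1}(d₁)`, `μ_{t=1}(d₂)`, `μ_{t=1}(d₃)`
(obtained from `h₂` via the cocycles `φ₁, φ₂, φ₃` at `t = 1`) is solvable; and
`μ_{t=1}(d₃)` — the algebra with nonzero brackets `[e₁,e₃] = e₅`,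
`[e₁,e₄] = e₁`, `[e₂,e₄] = e₅ + e₂`, `[e₃,e₄] = e₃`, `[e₄,e₅] = −2e₅` — is
solvable but not nilpotent. -/
theorem deformations_solvable_d3_not_nilpotent :
    LieAlgebra.IsSolvable L1 ∧ LieAlgebra.IsSolvable L2 ∧
      LieAlgebra.IsSolvable L3 ∧ ¬ LieRing.IsNilpotent L3 :=
  ⟨L1_solvable, L2_solvable, L3_solvable, L3_not_nilpotent⟩
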